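/- Let X be a connected topological space, m ≥ 1, and let γ : X → Sym(m, ℝ) be a continuous map into the real symmetric m × m matrices such that for every x ∈ X the kernel (radical) of γ(x) is exactly one-dimensional. If γ(x₀) is positive semidefinite for some x₀ ∈ X, then γ(x) is positive semidefinite for every x ∈ X. -/

import Mathlib

open Matrix

private lemma dps {m : ℕ} (v : Fin m → ℝ) : 0 ≤ v ⬝ᵥ v :=
  Finset.sum_nonneg fun i _ => mul_self_nonneg _

private lemma quad_aux {m : ℕ} (M : Matrix (Fin m) (Fin m) ℝ) (hM : M.IsSymm)
    {k : Fin m → ℝ} (hk : M *ᵥ k = 0) (u : Fin m → ℝ) (a b : ℝ) :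
    (a • u + b • k) ⬝ᵥ M *ᵥ (a • u + b • k) = a ^ 2 * (u ⬝ᵥ M *ᵥ u) := by
  have hkM : ∀ x : Fin m → ℝ, k ⬝ᵥ M *ᵥ x = 0 := by
    intro x
    have h2 : k ᵥ* M = M *ᵥ k := by
      nth_rewrite 1 [← hM.eq]
      exact vecMul_transpose M k
    rw [dotProduct_mulVec, h2, hk, zero_dotProduct]
  simp [mulVec_add, mulVec_smul, hk, dotProduct_add, add_dotProduct, smul_dotProduct,
    dotProduct_smul, hkM, smul_eq_mul]
  ring

private lemma quad_smul {m : ℕ} (M : Matrix (Fin m) (Fin m) ℝ) (c : ℝ) (v : Fin m → ℝ) :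
    (c • v) ⬝ᵥ M *ᵥ (c • v) = c ^ 2 * (v ⬝ᵥ M *ᵥ v) := by
  simp [mulVec_smul, dotProduct_smul, smul_dotProduct, smul_eq_mul]; ring

theorem stmt_12 {X : Type*} [TopologicalSpace X] [ConnectedSpace X]
    (m : ℕ) (hm : 1 ≤ m)
    (γ : X → Matrix (Fin m) (Fin m) ℝ)
    (hcont : Continuous γ)
    (hsymm : ∀ x : X, (γ x).IsSymm)
    (hker : ∀ x : X, Module.finrank ℝ (LinearMap.ker (γ x).mulVecLin) = 1)
    (x₀ : X) (h₀ : (γ x₀).PosSemidef) :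
    ∀ x : X, (γ x).PosSemidef := by
  have hherm : ∀ x, (γ x).IsHermitian := fun x => by
    rw [IsHermitian, conjTranspose_eq_transpose_of_trivial]; exact (hsymm x).eq
  set S : Set X := {x | (γ x).PosSemidef} with hSdef
  -- continuity of the quadratic form jointly
  have hQcont : Continuous fun p : X × (Fin m → ℝ) => p.2 ⬝ᵥ (γ p.1) *ᵥ p.2 :=
    continuous_snd.dotProduct ((hcont.comp continuous_fst).matrix_mulVec continuous_snd)
  -- S is closed
  have hclosed : IsClosed S := by
    have : S = ⋂ v : Fin m → ℝ, {x | 0 ≤ v ⬝ᵥ (γ x) *ᵥ v} := by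
      ext x
      simp only [Set.mem_iInter, Set.mem_setOf_eq, hSdef]
      constructor
      · intro h v; simpa using h.dotProduct_mulVec_nonneg v
      · intro h; exact PosSemidef.of_dotProduct_mulVec_nonneg (hherm x) (fun v => by simpa using h v)
    rw [this]
    exact isClosed_iInter fun v =>
      isClosed_le continuous_const (hQcont.comp (continuous_id.prodMk continuous_const))
  -- S is open
  have hopen : IsOpen S := by
    rw [isOpen_iff_mem_nhds]
    intro a ha
    -- kernel vector at a
    obtain ⟨w, hwker, hw0⟩ : ∃ w, w ∈ LinearMap.ker (γ a).mulVecLin ∧ w ≠ 0 := by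
      apply Submodule.exists_mem_ne_zero_of_ne_bot
      intro hbot
      have := hker a
      rw [hbot] at this
      simpa using this
    have hwa : γ a *ᵥ w = 0 := hwker
    have hkerspan : LinearMap.ker (γ a).mulVecLin = Submodule.span ℝ {w} := by
      symm
      apply Submodule.eq_of_le_of_finrank_le
      · rwa [Submodule.span_singleton_le_iff_mem]
      · rw [hker a, finrank_span_singleton hw0]
    have hww : (0:ℝ) < w ⬝ᵥ w := by
      rcases lt_or_eq_of_le (dps w) with h | h
      · exact h
      · exact absurd (dotProduct_self_eq_zero.mp h.symm) hw0
    -- compact set K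
    set K : Set (Fin m → ℝ) := {v | v ⬝ᵥ v = 1 ∧ v ⬝ᵥ w = 0} with hKdef
    have hKcompact : IsCompact K := by
      apply Metric.isCompact_of_isClosed_isBounded
      · exact IsClosed.inter
          (isClosed_eq (continuous_id.dotProduct continuous_id) continuous_const)
          (isClosed_eq (continuous_id.dotProduct continuous_const) continuous_const)
      · apply Bornology.IsBounded.subset (Metric.isBounded_closedBall (x := (0 : Fin m → ℝ)) (r := 1))
        intro v hv
        rw [Metric.mem_closedBall, dist_zero_right]
        refine pi_norm_le_iff_of_nonneg zero_le_one |>.mpr fun i => ?_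
        rw [Real.norm_eq_abs, abs_le_one_iff_mul_self_le_one]
        calc v i * v i ≤ v ⬝ᵥ v := by
              apply Finset.single_le_sum (f := fun j => v j * v j)
                (fun j _ => mul_self_nonneg _) (Finset.mem_univ i)
          _ = 1 := hv.1
    -- positivity of Q a on K
    have hposK : ∀ v ∈ K, 0 < v ⬝ᵥ (γ a) *ᵥ v := by
      intro v hv
      have h0 : 0 ≤ v ⬝ᵥ (γ a) *ᵥ v := by simpa using ha.dotProduct_mulVec_nonneg v
      rcases lt_or_eq_of_le h0 with h | h
      · exact h
      · exfalso
        have hvk : γ a *ᵥ v = 0 := by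
          have := (ha.dotProduct_mulVec_zero_iff v).mp (by simpa using h.symm)
          simpa using this
        have : v ∈ Submodule.span ℝ {w} := by
          rw [← hkerspan]; exact hvk
        obtain ⟨c, rfl⟩ := Submodule.mem_span_singleton.mp this
        have hc : c = 0 := by
          have := hv.2
          rw [smul_dotProduct, smul_eq_mul] at this
          rcases mul_eq_zero.mp this with h | h
          · exact h
          · exact absurd h hww.ne'
        rw [hc, zero_smul] at hv
        simpa using hv.1
    -- tube lemma
    obtain ⟨U, V, hUopen, _, haU, hKV, hUV⟩ :=
      generalized_tube_lemma isCompact_singleton hKcompact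
        (isOpen_lt continuous_const hQcont)
        (fun p hp => by
          rcases Set.mem_prod.mp hp with ⟨hp1, hp2⟩
          have hp1' : p.1 = a := Set.mem_singleton_iff.mp hp1
          simp only [Set.mem_setOf_eq]
          rw [hp1']
          exact hposK p.2 hp2)
    refine Filter.mem_of_superset (hUopen.mem_nhds (haU rfl)) ?_
    intro y hy
    -- show γ y is PSD
    by_contra hyns
    have : ∃ u : Fin m → ℝ, u ⬝ᵥ (γ y) *ᵥ u < 0 := by
      by_contra hno
      push_neg at hno
      exact hyns (PosSemidef.of_dotProduct_mulVec_nonneg (hherm y) (fun v => by simpa using hno v))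
    obtain ⟨u, hu⟩ := this
    -- kernel vector at y
    obtain ⟨k, hkker, hk0⟩ : ∃ k, k ∈ LinearMap.ker (γ y).mulVecLin ∧ k ≠ 0 := by
      apply Submodule.exists_mem_ne_zero_of_ne_bot
      intro hbot
      have := hker y
      rw [hbot] at this
      simpa using this
    have hky : γ y *ᵥ k = 0 := hkker
    -- produce v ≠ 0 with v ⬝ᵥ w = 0 and Q y v ≤ 0
    obtain ⟨v, hv0, hvw, hvq⟩ : ∃ v : Fin m → ℝ, v ≠ 0 ∧ v ⬝ᵥ w = 0 ∧ v ⬝ᵥ (γ y) *ᵥ v ≤ 0 := by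
      by_cases hkw : k ⬝ᵥ w = 0
      · exact ⟨k, hk0, hkw, by rw [hky]; simp⟩
      · refine ⟨(k ⬝ᵥ w) • u + (-(u ⬝ᵥ w)) • k, ?_, ?_, ?_⟩
        · intro hv
          have := quad_aux (γ y) (hsymm y) hky u (k ⬝ᵥ w) (-(u ⬝ᵥ w))
          rw [hv] at this
          simp only [zero_dotProduct] at this
          have : (k ⬝ᵥ w) ^ 2 * (u ⬝ᵥ (γ y) *ᵥ u) = 0 := this.symm
          rcases mul_eq_zero.mp this with h | h
          · exact hkw (pow_eq_zero_iff (n := 2) (by norm_num) |>.mp h)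
          · exact hu.ne h
        · rw [add_dotProduct, smul_dotProduct, smul_dotProduct, smul_eq_mul, smul_eq_mul]
          ring
        · rw [quad_aux (γ y) (hsymm y) hky u]
          exact mul_nonpos_of_nonneg_of_nonpos (sq_nonneg _) hu.le
    -- normalize v and land in K
    have hvv : (0:ℝ) < v ⬝ᵥ v := by
      rcases lt_or_eq_of_le (dps v) with h | h
      · exact h
      · exact absurd (dotProduct_self_eq_zero.mp h.symm) hv0
    set c : ℝ := (Real.sqrt (v ⬝ᵥ v))⁻¹ with hc
    have hsq : Real.sqrt (v ⬝ᵥ v) ≠ 0 := by positivity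
    have hcK : c • v ∈ K := by
      constructor
      · show (c • v) ⬝ᵥ (c • v) = 1
        rw [smul_dotProduct, dotProduct_smul, smul_eq_mul, smul_eq_mul, hc]
        rw [← mul_assoc]
        rw [← mul_inv]
        rw [← Real.sqrt_mul_self (dps v)]
        field_simp
        rw [Real.sq_sqrt (Real.sqrt_nonneg _)]
      · show (c • v) ⬝ᵥ w = 0
        rw [smul_dotProduct, smul_eq_mul, hvw, mul_zero]
    have hpos : 0 < (c • v) ⬝ᵥ (γ y) *ᵥ (c • v) :=
      hUV (Set.mem_prod.mpr (⟨hy, hKV hcK⟩ : (y, c • v).1 ∈ U ∧ (y, c • v).2 ∈ V))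
    rw [quad_smul] at hpos
    have : (0:ℝ) < c ^ 2 := by positivity
    nlinarith
  have : S = Set.univ := IsClopen.eq_univ ⟨hclosed, hopen⟩ ⟨x₀, h₀⟩
  intro x
  have : x ∈ S := this ▸ Set.mem_univ x
  exact this
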